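/- Every Mauldin–Williams graph has a unique invariant list: there exists exactly one family (K_v)_{v∈V} of nonempty compact sets K_v ⊆ T_v such that K_v = ⋃_{e∈E, s(e)=v} φ_e(K_{r(e)}) holds for every vertex v ∈ V. -/

import Mathlib

/-- A finite directed graph with surjective range and source maps
(no sources and no sinks). -/
structure DirGraph (V E : Type*) where
  r : E → V
  s : E → V
  r_surj : Function.Surjective r
  s_surj : Function.Surjective s

/-- A Mauldin–Williams graph over the directed graph `G`.  The compact metric
spaces `T v` are realized as pairwise disjoint nonempty compact subsets of an
ambient metric space `X` (modelling their disjoint union), and for each edge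
`e` the map `φ e : T (r e) → T (s e)` satisfies
`c₁ * dist x y ≤ dist (φ e x) (φ e y) ≤ c * dist x y` with `0 < c₁ ≤ c < 1`. -/
structure MWGraph {V E : Type*} (G : DirGraph V E) (X : Type*) [MetricSpace X] where
  T : V → Set X
  φ : E → X → X
  c₁ : ℝ
  c : ℝ
  c₁_pos : 0 < c₁
  c₁_le_c : c₁ ≤ c
  c_lt_one : c < 1
  T_compact : ∀ v, IsCompact (T v)
  T_nonempty : ∀ v, (T v).Nonempty
  T_disjoint : ∀ v w, v ≠ w → Disjoint (T v) (T w)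
  maps_to : ∀ e, Set.MapsTo (φ e) (T (G.r e)) (T (G.s e))
  lower : ∀ e, ∀ x ∈ T (G.r e), ∀ y ∈ T (G.r e), c₁ * dist x y ≤ dist (φ e x) (φ e y)
  upper : ∀ e, ∀ x ∈ T (G.r e), ∀ y ∈ T (G.r e), dist (φ e x) (φ e y) ≤ c * dist x y

namespace MWGraph

variable {V E : Type*} {G : DirGraph V E} {X : Type*} [MetricSpace X]

/-- `K : V → Set X` is an invariant list for the Mauldin–Williams graph `M`:
a family of nonempty compact sets `K v ⊆ T v` with
`K v = ⋃_{e ∈ E, s e = v} φ e '' K (r e)` for every vertex `v`. -/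
def IsInvariantList (M : MWGraph G X) (K : V → Set X) : Prop :=
  (∀ v, K v ⊆ M.T v) ∧ (∀ v, IsCompact (K v)) ∧ (∀ v, (K v).Nonempty) ∧
    (∀ v, K v = ⋃ e ∈ {e : E | G.s e = v}, M.φ e '' K (G.r e))

/-- The Mauldin–Williams graph coincides with its own invariant list,
i.e. `(T v)_{v ∈ V}` is itself the invariant list. -/
def SelfInvariant (M : MWGraph G X) : Prop :=
  ∀ v, M.T v = ⋃ e ∈ {e : E | G.s e = v}, M.φ e '' M.T (G.r e)

/-- The invariant set: the (disjoint) union of the sets of the family. -/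
def KK (M : MWGraph G X) : Set X := ⋃ v, M.T v

/-- A Mauldin–Williams graph is totally disconnected if
`φ e '' K (r e)` and `φ g '' K (r g)` are disjoint whenever `e ≠ g`, `s e = s g`. -/
def TotallyDisconnected (M : MWGraph G X) : Prop :=
  ∀ e g : E, e ≠ g → G.s e = G.s g →
    Disjoint (M.φ e '' M.T (G.r e)) (M.φ g '' M.T (G.r g))

end MWGraph

section Aux

open Set EMetric Metric ENNReal

namespace MWGraph

variable {V E : Type*} {G : DirGraph V E} {X : Type*} [MetricSpace X]

lemma c_pos (M : MWGraph G X) : 0 < M.c := lt_of_lt_of_le M.c₁_pos M.c₁_le_c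

lemma injOn_phi (M : MWGraph G X) (e : E) : Set.InjOn (M.φ e) (M.T (G.r e)) := by
  intro x hx y hy h
  by_contra hne
  have hd : 0 < dist x y := dist_pos.2 hne
  have h2 := M.lower e x hx y hy
  rw [h, dist_self] at h2
  nlinarith [M.c₁_pos]

lemma continuousOn_phi (M : MWGraph G X) (e : E) : ContinuousOn (M.φ e) (M.T (G.r e)) :=
  (LipschitzOnWith.of_dist_le' (fun x hx y hy => M.upper e x hx y hy)).continuousOn

lemma edist_phi (M : MWGraph G X) (e : E) {x y : X} (hx : x ∈ M.T (G.r e))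
    (hy : y ∈ M.T (G.r e)) :
    edist (M.φ e x) (M.φ e y) ≤ ENNReal.ofReal M.c * edist x y := by
  rw [edist_dist, edist_dist, ← ENNReal.ofReal_mul M.c_pos.le]
  exact ENNReal.ofReal_le_ofReal (M.upper e x hx y hy)

lemma hausdorffEdist_image_le (M : MWGraph G X) (e : E) {s t : Set X}
    (hs : s ⊆ M.T (G.r e)) (ht : t ⊆ M.T (G.r e))
    (hsc : IsCompact s) (htc : IsCompact t) (hsne : s.Nonempty) (htne : t.Nonempty) :
    hausdorffEdist (M.φ e '' s) (M.φ e '' t) ≤ ENNReal.ofReal M.c * hausdorffEdist s t := by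
  have key : ∀ s t : Set X, s ⊆ M.T (G.r e) → t ⊆ M.T (G.r e) → IsCompact t → t.Nonempty →
      ∀ z ∈ M.φ e '' s, infEdist z (M.φ e '' t) ≤ ENNReal.ofReal M.c * hausdorffEdist s t := by
    rintro s t hs ht htc htne z ⟨x, hx, rfl⟩
    obtain ⟨y, hy, hxy⟩ := htc.exists_infEdist_eq_edist htne x
    calc infEdist (M.φ e x) (M.φ e '' t) ≤ edist (M.φ e x) (M.φ e y) :=
        infEdist_le_edist_of_mem (mem_image_of_mem _ hy)
      _ ≤ ENNReal.ofReal M.c * edist x y := M.edist_phi e (hs hx) (ht hy)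
      _ = ENNReal.ofReal M.c * infEdist x t := by exact congrArg _ hxy.symm
      _ ≤ ENNReal.ofReal M.c * hausdorffEdist s t :=
        (by gcongr; exact infEdist_le_hausdorffEdist_of_mem hx)
  refine hausdorffEdist_le_of_infEdist (key s t hs ht htc htne) fun z hz => ?_
  exact (key t s ht hs hsc hsne z hz).trans_eq (by exact congrArg _ hausdorffEDist_comm)

lemma hausdorffEdist_biUnion_le {ι : Type*} {P : Set ι} {A B : ι → Set X} {D : ℝ≥0∞}
    (h : ∀ e ∈ P, hausdorffEdist (A e) (B e) ≤ D) :
    hausdorffEdist (⋃ e ∈ P, A e) (⋃ e ∈ P, B e) ≤ D := by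
  have key : ∀ A B : ι → Set X, (∀ e ∈ P, hausdorffEdist (A e) (B e) ≤ D) →
      ∀ x ∈ ⋃ e ∈ P, A e, infEdist x (⋃ e ∈ P, B e) ≤ D := by
    intro A B h x hx
    obtain ⟨e, he, hxe⟩ := Set.mem_iUnion₂.1 hx
    calc infEdist x (⋃ e ∈ P, B e) ≤ infEdist x (B e) :=
        infEdist_anti (Set.subset_biUnion_of_mem he)
      _ ≤ hausdorffEdist (A e) (B e) := infEdist_le_hausdorffEdist_of_mem hxe
      _ ≤ D := h e he
  exact hausdorffEdist_le_of_infEdist (key A B h)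
    (key B A fun e he => (h e he).trans_eq' (by exact hausdorffEDist_comm))

/-- Uniqueness of the invariant list. -/
lemma invariantList_unique [Fintype V] (M : MWGraph G X) {K K' : V → Set X}
    (hK : M.IsInvariantList K) (hK' : M.IsInvariantList K') : K = K' := by
  obtain ⟨hKT, hKc, hKne, hKeq⟩ := hK
  obtain ⟨hKT', hKc', hKne', hKeq'⟩ := hK'
  set D : ℝ≥0∞ := Finset.univ.sup (fun v => hausdorffEdist (K v) (K' v)) with hD
  have hDtop : D ≠ ⊤ := by
    rw [hD]
    refine ne_of_lt ((Finset.sup_lt_iff (by simp : (⊥ : ℝ≥0∞) < ⊤)).2 fun v _ => ?_)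
    have hb : Bornology.IsBounded (K v ∪ K' v) := ((hKc v).union (hKc' v)).isBounded
    exact lt_of_le_of_lt (hausdorffEdist_le_ediam (hKne v) (hKne' v))
      (lt_top_iff_ne_top.2 (Metric.isBounded_iff_ediam_ne_top.1 hb))
  have key : ∀ v, hausdorffEdist (K v) (K' v) ≤ ENNReal.ofReal M.c * D := by
    intro v
    rw [hKeq v, hKeq' v]
    refine hausdorffEdist_biUnion_le fun e _ => ?_
    exact (M.hausdorffEdist_image_le e (hKT _) (hKT' _) (hKc _) (hKc' _) (hKne _)
      (hKne' _)).trans (by gcongr; exact Finset.le_sup (f := fun v => hausdorffEdist (K v) (K' v)) (Finset.mem_univ _))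
  have hDle : D ≤ ENNReal.ofReal M.c * D := Finset.sup_le fun v _ => key v
  have hD0 : D = 0 := by
    by_contra h
    have hlt : ENNReal.ofReal M.c * D < 1 * D :=
      ENNReal.mul_lt_mul_left h hDtop (ENNReal.ofReal_lt_one.2 M.c_lt_one)
    rw [one_mul] at hlt
    exact absurd hDle (not_le.2 hlt)
  funext v
  have h0 : hausdorffEdist (K v) (K' v) = 0 :=
    le_antisymm (hD0 ▸ Finset.le_sup (f := fun v => hausdorffEdist (K v) (K' v)) (Finset.mem_univ v)) zero_le'
  exact (hausdorffEdist_zero_iff_eq_of_closed (hKc v).isClosed (hKc' v).isClosed).1 h0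

set_option maxHeartbeats 1000000 in
/-- Existence of an invariant list. -/
lemma exists_invariantList [Finite E] (M : MWGraph G X) :
    ∃ K : V → Set X, M.IsInvariantList K := by
  classical
  set F : (V → Set X) → (V → Set X) :=
    fun K v => ⋃ e ∈ {e : E | G.s e = v}, M.φ e '' K (G.r e) with hF
  have hFmono : ∀ K L : V → Set X, (∀ v, K v ⊆ L v) → ∀ v, F K v ⊆ F L v := fun K L h v =>
    Set.iUnion₂_mono fun e _ => Set.image_mono (h _)
  set A : ℕ → V → Set X := fun n => F^[n] M.T with hA
  have hAsucc : ∀ n, A (n + 1) = F (A n) := fun n => Function.iterate_succ_apply' F n M.T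
  have h1 : ∀ v, F M.T v ⊆ M.T v := by
    intro v
    refine Set.iUnion₂_subset fun e he => ?_
    have := (M.maps_to e).image_subset
    rwa [show G.s e = v from he] at this
  have hsub : ∀ n v, A (n + 1) v ⊆ A n v := by
    intro n
    induction n with
    | zero => intro v; rw [hAsucc 0]; exact h1 v
    | succ n ih =>
      intro v
      rw [hAsucc (n + 1), hAsucc n]
      refine hFmono _ _ (fun w => ?_) v
      rw [← hAsucc n]
      exact ih w
  have hanti : ∀ v, Antitone fun n => A n v := fun v =>
    antitone_nat_of_succ_le (fun n => hsub n v)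
  have hT : ∀ n v, A n v ⊆ M.T v := fun n v => hanti v (Nat.zero_le n)
  have hcpt : ∀ n v, IsCompact (A n v) := by
    intro n
    induction n with
    | zero => exact M.T_compact
    | succ n ih =>
      intro v
      rw [hAsucc n]
      refine (Set.toFinite _).isCompact_biUnion fun e _ => ?_
      exact (ih (G.r e)).image_of_continuousOn ((M.continuousOn_phi e).mono (hT n _))
  have hne : ∀ n v, (A n v).Nonempty := by
    intro n
    induction n with
    | zero => exact M.T_nonempty
    | succ n ih =>
      intro v
      obtain ⟨e, he⟩ := G.s_surj v
      obtain ⟨x, hx⟩ := ih (G.r e)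
      rw [hAsucc n]
      exact ⟨M.φ e x, Set.mem_biUnion he (Set.mem_image_of_mem _ hx)⟩
  refine ⟨fun v => ⋂ n, A n v, fun v => Set.iInter_subset _ 0, fun v => ?_, fun v => ?_, fun v => ?_⟩
  · exact (M.T_compact v).of_isClosed_subset
      (isClosed_iInter fun n => (hcpt n v).isClosed) (Set.iInter_subset _ 0)
  · exact IsCompact.nonempty_iInter_of_sequence_nonempty_isCompact_isClosed
      (fun n => A n v) (fun n => hsub n v) (fun n => hne n v) (hcpt 0 v)
      (fun n => (hcpt n v).isClosed)
  · apply Set.Subset.antisymm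
    · intro x hx
      have hx' : ∀ n : ℕ, ∃ e : E, G.s e = v ∧ x ∈ M.φ e '' A n (G.r e) := by
        intro n
        have hxn : x ∈ A (n + 1) v := Set.mem_iInter.1 hx (n + 1)
        rw [hAsucc n] at hxn
        obtain ⟨e, he, hxe⟩ := Set.mem_iUnion₂.1 hxn
        exact ⟨e, he, hxe⟩
      choose en hen1 hen2 using hx'
      obtain ⟨e, hfib⟩ := Finite.exists_infinite_fiber en
      have hfib' : (en ⁻¹' {e}).Infinite := Set.infinite_coe_iff.1 hfib
      obtain ⟨n₀, hn₀, -⟩ := hfib'.exists_gt 0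
      have hse : G.s e = v := by
        have := hen1 n₀
        rwa [show en n₀ = e from hn₀] at this
      have hall : ∀ m, x ∈ M.φ e '' A m (G.r e) := by
        intro m
        obtain ⟨n, hn, hmn⟩ := hfib'.exists_gt m
        have h2 := hen2 n
        rw [show en n = e from hn] at h2
        exact Set.image_mono (hanti (G.r e) hmn.le) h2
      have himg : M.φ e '' ⋂ m, A m (G.r e) = ⋂ m, M.φ e '' A m (G.r e) :=
        ((M.injOn_phi e).mono
          (Set.iUnion_subset fun m => hT m (G.r e))).image_iInter_eq
      refine Set.mem_biUnion (show e ∈ {e : E | G.s e = v} from hse) ?_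
      rw [himg]
      exact Set.mem_iInter.2 hall
    · refine Set.subset_iInter fun m => ?_
      have step : F (fun v => ⋂ n, A n v) v ⊆ A (m + 1) v := by
        rw [hAsucc m]
        exact hFmono (fun v => ⋂ n, A n v) (A m) (fun w => Set.iInter_subset _ m) v
      exact step.trans (hsub m v)

end MWGraph

end Aux

/-- Every Mauldin–Williams graph has a unique invariant list:
there is exactly one family `(K v)_{v ∈ V}` of nonempty compact sets `K v ⊆ T v`
with `K v = ⋃_{e ∈ E, s e = v} φ e '' K (r e)` for every `v ∈ V`. -/
theorem MWGraph.existsUnique_invariantList {V E : Type*} [Fintype V] [Fintype E]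
    {G : DirGraph V E} {X : Type*} [MetricSpace X] (M : MWGraph G X) :
    ∃! K : V → Set X, M.IsInvariantList K := by
  obtain ⟨K, hK⟩ := M.exists_invariantList
  exact ⟨K, hK, fun K' hK' => M.invariantList_unique hK' hK⟩
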